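/- Performance difference via advantages: for any two stationary policies π and π' in a finite discounted MDP, (1-γ)·E_{s~q}[V^{π'}(s) − V^π(s)] = Σ_s d^{π'}_q(s) Σ_a π'(a|s) A^π(s,a), where d^{π'}_q(s) = (1-γ) Σ_{t≥0} γ^t Pr_{π'}(s_t = s | s_0 ~ q) is the normalized discounted occupancy measure of π'. -/
import Mathlib

open scoped BigOperators
open Matrix Finset

/-- `P` is a transition kernel: each `P s a` is a probability distribution on states. -/
def IsKernel {S A : Type*} [Fintype S] (P : S → A → S → ℝ) : Prop :=
  ∀ s a, (∀ s', 0 ≤ P s a s') ∧ (∑ s', P s a s') = 1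

/-- `π` is a randomized stationary policy. -/
def IsPolicy {S A : Type*} [Fintype A] (π : S → A → ℝ) : Prop :=
  ∀ s, (∀ a, 0 ≤ π s a) ∧ (∑ a, π s a) = 1

/-- State-transition matrix induced by a policy. -/
noncomputable def Pmat {S A : Type*} [Fintype A] (P : S → A → S → ℝ) (π : S → A → ℝ) :
    Matrix S S ℝ :=
  Matrix.of fun s s' => ∑ a, π s a * P s a s'

/-- Expected one-step reward under a policy. -/
noncomputable def rPol {S A : Type*} [Fintype A] (r : S → A → ℝ) (π : S → A → ℝ) : S → ℝ :=
  fun s => ∑ a, π s a * r s a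

/-- Expected discounted reward of the stationary policy `π` started at `s`. -/
noncomputable def polValue {S A : Type*} [Fintype S] [Fintype A] [DecidableEq S]
    (P : S → A → S → ℝ) (r : S → A → ℝ) (γ : ℝ) (π : S → A → ℝ) : S → ℝ :=
  fun s => ∑' t : ℕ, γ ^ t * ((Pmat P π ^ t).mulVec (rPol r π)) s

/-- The Bellman optimality operator. -/
noncomputable def bellman {S A : Type*} [Fintype S] [Fintype A]
    (P : S → A → S → ℝ) (r : S → A → ℝ) (γ : ℝ) (V : S → ℝ) : S → ℝ :=
  fun s => ⨆ a, (r s a + γ * ∑ s', P s a s' * V s')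

/-- Primal (LP) feasibility: `V ≥ T V` pointwise, written constraint-wise. -/
def PrimalFeasible {S A : Type*} [Fintype S]
    (P : S → A → S → ℝ) (r : S → A → ℝ) (γ : ℝ) (V : S → ℝ) : Prop :=
  ∀ s a, r s a + γ * ∑ s', P s a s' * V s' ≤ V s

/-- Dual (LP) feasibility: nonnegativity and the flow-conservation constraint. -/
def DualFeasible {S A : Type*} [Fintype S] [Fintype A]
    (P : S → A → S → ℝ) (q : S → ℝ) (γ : ℝ) (μ : S → A → ℝ) : Prop :=
  (∀ s a, 0 ≤ μ s a) ∧
  ∀ s, ∑ a, μ s a = (1 - γ) * q s + γ * ∑ s', ∑ a', P s' a' s * μ s' a'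

section Aux

variable {S : Type*} [Fintype S] [DecidableEq S]

/-- Row-stochastic matrix. -/
def RowStoch (M : Matrix S S ℝ) : Prop :=
  (∀ i j, 0 ≤ M i j) ∧ ∀ i, ∑ j, M i j = 1

lemma RowStoch.mul {M N : Matrix S S ℝ} (hM : RowStoch M) (hN : RowStoch N) :
    RowStoch (M * N) := by
  refine ⟨fun i j => Finset.sum_nonneg fun k _ => mul_nonneg (hM.1 i k) (hN.1 k j), fun i => ?_⟩
  simp only [Matrix.mul_apply]
  rw [Finset.sum_comm]
  simp only [← Finset.mul_sum, hN.2, mul_one, hM.2]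

lemma RowStoch.pow {M : Matrix S S ℝ} (hM : RowStoch M) : ∀ n, RowStoch (M ^ n)
  | 0 => by
    constructor
    · intro i j
      rw [pow_zero, Matrix.one_apply]
      split <;> norm_num
    · intro i
      rw [pow_zero]
      simp [Matrix.one_apply]
  | n + 1 => by
    rw [pow_succ]
    exact (RowStoch.pow hM n).mul hM

end Aux

/-- performance-difference lemma via advantages. -/
theorem performance_difference
    {S A : Type*} [Fintype S] [Fintype A] [DecidableEq S]
    (P : S → A → S → ℝ) (r : S → A → ℝ) (γ : ℝ) (q : S → ℝ)
    (hP : IsKernel P) (hγ0 : 0 ≤ γ) (hγ1 : γ < 1)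
    (hq0 : ∀ s, 0 ≤ q s) (hq1 : ∑ s, q s = 1)
    (π π' : S → A → ℝ) (hπ : IsPolicy π) (hπ' : IsPolicy π')
    (Vπ Vπ' : S → ℝ)
    (hbell : ∀ s, Vπ s = ∑ a, π s a * (r s a + γ * ∑ s', P s a s' * Vπ s'))
    (hbell' : ∀ s, Vπ' s = ∑ a, π' s a * (r s a + γ * ∑ s', P s a s' * Vπ' s')) :
    (1 - γ) * ∑ s, q s * (Vπ' s - Vπ s) =
      ∑ s, ((1 - γ) * ∑' t : ℕ, γ ^ t * Matrix.vecMul q (Pmat P π' ^ t) s) *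
        ∑ a, π' s a * (r s a + γ * (∑ s', P s a s' * Vπ s') - Vπ s) := by
  set M : Matrix S S ℝ := Pmat P π' with hM
  set W : S → ℝ := fun s => Vπ' s - Vπ s with hW
  set g : S → ℝ := fun s => ∑ a, π' s a * (r s a + γ * (∑ s', P s a s' * Vπ s') - Vπ s)
    with hg
  -- M is row stochastic
  have hMs : RowStoch M := by
    constructor
    · intro i j
      exact Finset.sum_nonneg fun a _ => mul_nonneg ((hπ' i).1 a) ((hP i a).1 j)
    · intro i
      show ∑ j, ∑ a, π' i a * P i a j = 1
      rw [Finset.sum_comm]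
      simp only [← Finset.mul_sum]
      simp only [(fun a => (hP i a).2 : ∀ a, (∑ s', P i a s') = 1), mul_one]
      exact (hπ' i).2
  -- entries of q * M^t
  have hdn : ∀ (t : ℕ) (s : S), 0 ≤ Matrix.vecMul q (M ^ t) s := by
    intro t s
    exact Finset.sum_nonneg fun k _ => mul_nonneg (hq0 k) ((hMs.pow t).1 k s)
  have hdsum : ∀ t : ℕ, ∑ s, Matrix.vecMul q (M ^ t) s = 1 := by
    intro t
    have hv : ∀ s, Matrix.vecMul q (M ^ t) s = ∑ k, q k * (M ^ t) k s := fun s => rfl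
    simp only [hv]
    rw [Finset.sum_comm]
    simp only [← Finset.mul_sum, (hMs.pow t).2, mul_one]
    exact hq1
  have hd1 : ∀ (t : ℕ) (s : S), Matrix.vecMul q (M ^ t) s ≤ 1 := by
    intro t s
    calc Matrix.vecMul q (M ^ t) s ≤ ∑ s', Matrix.vecMul q (M ^ t) s' :=
          Finset.single_le_sum (fun k _ => hdn t k) (Finset.mem_univ s)
      _ = 1 := hdsum t
  -- one-step recursion
  have hmulW : ∀ s, M.mulVec W s = ∑ a, π' s a * ∑ s', P s a s' * W s' := by
    intro s
    show ∑ s', (∑ a, π' s a * P s a s') * W s' = _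
    simp only [Finset.sum_mul]
    rw [Finset.sum_comm]
    simp only [mul_assoc, ← Finset.mul_sum]
  have hrec : ∀ s, W s = g s + γ * M.mulVec W s := by
    intro s
    rw [hmulW s]
    have h1 : Vπ' s - Vπ s =
        ∑ a, π' s a * (r s a + γ * (∑ s', P s a s' * Vπ s') - Vπ s)
          + γ * ∑ a, π' s a * ∑ s', P s a s' * (Vπ' s' - Vπ s') := by
      rw [hbell' s]
      rw [Finset.mul_sum, ← Finset.sum_add_distrib]
      have hVπ : Vπ s = ∑ a, π' s a * Vπ s := by
        rw [← Finset.sum_mul, (hπ' s).2, one_mul]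
      conv_lhs => rw [hVπ]
      rw [← Finset.sum_sub_distrib]
      apply Finset.sum_congr rfl
      intro a _
      have : ∑ s', P s a s' * (Vπ' s' - Vπ s') =
          (∑ s', P s a s' * Vπ' s') - ∑ s', P s a s' * Vπ s' := by
        rw [← Finset.sum_sub_distrib]
        apply Finset.sum_congr rfl
        intro s' _
        ring
      rw [this]
      ring
    exact h1
  -- iterate
  have hiter : ∀ (n : ℕ) (s : S),
      W s = (∑ t ∈ Finset.range n, γ ^ t * (M ^ t).mulVec g s)
        + γ ^ n * (M ^ n).mulVec W s := by
    intro n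
    induction n with
    | zero =>
      intro s
      simp [Matrix.one_mulVec]
    | succ n ih =>
      intro s
      have hWfun : W = fun s' => g s' + γ * M.mulVec W s' := funext hrec
      have h2 : (M ^ n).mulVec W = fun s' =>
          (M ^ n).mulVec g s' + γ * (M ^ (n + 1)).mulVec W s' := by
        conv_lhs => rw [hWfun]
        funext s'
        have : (fun s'' => g s'' + γ * M.mulVec W s'') = g + γ • M.mulVec W := by
          funext x; simp [Pi.smul_apply, smul_eq_mul]
        rw [this, Matrix.mulVec_add, Matrix.mulVec_smul]
        simp only [Pi.add_apply, Pi.smul_apply, smul_eq_mul]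
        congr 2
        rw [pow_succ, ← Matrix.mulVec_mulVec]
      rw [ih s, Finset.sum_range_succ]
      rw [congrFun h2 s]
      ring
  -- dot products
  let c : ℕ → ℝ := fun t => γ ^ t * ∑ s, Matrix.vecMul q (M ^ t) s * g s
  have hdot : ∀ n : ℕ,
      ∑ s, q s * W s = (∑ t ∈ Finset.range n, c t)
        + γ ^ n * ∑ s, Matrix.vecMul q (M ^ n) s * W s := by
    intro n
    have hswap : ∀ (k : ℕ) (v : S → ℝ),
        ∑ s, q s * (M ^ k).mulVec v s = ∑ s, Matrix.vecMul q (M ^ k) s * v s := by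
      intro k v
      exact Matrix.dotProduct_mulVec q (M ^ k) v
    calc ∑ s, q s * W s
        = ∑ s, q s * ((∑ t ∈ Finset.range n, γ ^ t * (M ^ t).mulVec g s)
            + γ ^ n * (M ^ n).mulVec W s) := by
          apply Finset.sum_congr rfl
          intro s _
          rw [← hiter n s]
      _ = (∑ t ∈ Finset.range n, γ ^ t * ∑ s, q s * (M ^ t).mulVec g s)
            + γ ^ n * ∑ s, q s * (M ^ n).mulVec W s := by
          simp only [mul_add, Finset.sum_add_distrib, Finset.mul_sum]
          rw [Finset.sum_comm]
          congr 1
          · apply Finset.sum_congr rfl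
            intro t _
            apply Finset.sum_congr rfl fun s _ => by ring
          · exact Finset.sum_congr rfl fun s _ => by ring
      _ = (∑ t ∈ Finset.range n, c t)
            + γ ^ n * ∑ s, Matrix.vecMul q (M ^ n) s * W s := by
          congr 1
          · exact Finset.sum_congr rfl fun t _ => by rw [hswap t g]
          · rw [hswap n W]
  -- error bound
  set C : ℝ := ∑ s, |W s| with hC
  have hCnn : 0 ≤ C := Finset.sum_nonneg fun s _ => abs_nonneg _
  have herr : ∀ n : ℕ, |∑ s, Matrix.vecMul q (M ^ n) s * W s| ≤ C := by
    intro n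
    calc |∑ s, Matrix.vecMul q (M ^ n) s * W s|
        ≤ ∑ s, |Matrix.vecMul q (M ^ n) s * W s| := Finset.abs_sum_le_sum_abs _ _
      _ ≤ ∑ s, |W s| := by
          apply Finset.sum_le_sum
          intro s _
          rw [abs_mul, abs_of_nonneg (hdn n s)]
          calc Matrix.vecMul q (M ^ n) s * |W s| ≤ 1 * |W s| :=
                mul_le_mul_of_nonneg_right (hd1 n s) (abs_nonneg _)
            _ = |W s| := one_mul _
  -- summability of c
  set Dg : ℝ := ∑ s, |g s| with hDg
  have hcbound : ∀ t : ℕ, |c t| ≤ γ ^ t * Dg := by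
    intro t
    rw [abs_mul, abs_of_nonneg (pow_nonneg hγ0 t)]
    apply mul_le_mul_of_nonneg_left _ (pow_nonneg hγ0 t)
    calc |∑ s, Matrix.vecMul q (M ^ t) s * g s|
        ≤ ∑ s, |Matrix.vecMul q (M ^ t) s * g s| := Finset.abs_sum_le_sum_abs _ _
      _ ≤ ∑ s, |g s| := by
          apply Finset.sum_le_sum
          intro s _
          rw [abs_mul, abs_of_nonneg (hdn t s)]
          calc Matrix.vecMul q (M ^ t) s * |g s| ≤ 1 * |g s| :=
                mul_le_mul_of_nonneg_right (hd1 t s) (abs_nonneg _)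
            _ = |g s| := one_mul _
  have hgeo : Summable (fun t : ℕ => γ ^ t) := summable_geometric_of_lt_one hγ0 hγ1
  have hcsum : Summable c :=
    Summable.of_abs (Summable.of_nonneg_of_le (fun t => abs_nonneg _) hcbound
      (hgeo.mul_right Dg))
  -- partial sums of c converge to q ⬝ W
  have htend : Filter.Tendsto (fun n => ∑ t ∈ Finset.range n, c t) Filter.atTop
      (nhds (∑ s, q s * W s)) := by
    have heq : ∀ n, ∑ t ∈ Finset.range n, c t =
        (∑ s, q s * W s) - γ ^ n * ∑ s, Matrix.vecMul q (M ^ n) s * W s := by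
      intro n
      rw [hdot n]; ring
    simp only [heq]
    have h0 : Filter.Tendsto (fun n : ℕ => γ ^ n * ∑ s, Matrix.vecMul q (M ^ n) s * W s)
        Filter.atTop (nhds 0) := by
      apply squeeze_zero_norm (a := fun n => γ ^ n * C)
      · intro n
        rw [Real.norm_eq_abs, abs_mul, abs_of_nonneg (pow_nonneg hγ0 n)]
        exact mul_le_mul_of_nonneg_left (herr n) (pow_nonneg hγ0 n)
      · have := tendsto_pow_atTop_nhds_zero_of_lt_one hγ0 hγ1
        simpa using this.mul_const C
    simpa using (tendsto_const_nhds (x := ∑ s, q s * W s)).sub h0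
  have htsum : ∑' t, c t = ∑ s, q s * W s := by
    exact tendsto_nhds_unique hcsum.hasSum.tendsto_sum_nat htend
  -- per-state summability
  have hssum : ∀ s : S, Summable (fun t : ℕ => γ ^ t * Matrix.vecMul q (M ^ t) s) := by
    intro s
    apply Summable.of_nonneg_of_le (fun t => mul_nonneg (pow_nonneg hγ0 t) (hdn t s))
      (fun t => ?_) hgeo
    calc γ ^ t * Matrix.vecMul q (M ^ t) s ≤ γ ^ t * 1 :=
          mul_le_mul_of_nonneg_left (hd1 t s) (pow_nonneg hγ0 t)
      _ = γ ^ t := mul_one _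
  -- now compute the RHS
  have hrhs : ∑ s, ((1 - γ) * ∑' t : ℕ, γ ^ t * Matrix.vecMul q (M ^ t) s) * g s
      = (1 - γ) * ∑' t, c t := by
    have h1 : ∀ s, ((1 - γ) * ∑' t : ℕ, γ ^ t * Matrix.vecMul q (M ^ t) s) * g s
        = (1 - γ) * ∑' t : ℕ, γ ^ t * Matrix.vecMul q (M ^ t) s * g s := by
      intro s
      rw [mul_assoc, ← tsum_mul_right]
    simp only [h1]
    rw [← Finset.mul_sum]
    congr 1
    rw [← Summable.tsum_finsetSum (fun s _ => ((hssum s).mul_right (g s)))]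
    apply tsum_congr
    intro t
    simp only [c]
    rw [Finset.mul_sum]
    exact Finset.sum_congr rfl fun s _ => by ring
  rw [show (∑ s, q s * (Vπ' s - Vπ s)) = ∑ s, q s * W s from rfl]
  rw [← htsum, ← hrhs]
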